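/- For m, k ∈ ℕ, the moment of the Legendre polynomial c_k^m := ∫_{−1}^{1} x^{m+2k} P_m(x) dx equals m! (m+1)_{2k} / (2^{m−1} (3/2)_m 4^k k! (m+3/2)_k). -/

import Mathlib

/-- The Pochhammer symbol (rising factorial) `(a)_n = a(a+1)⋯(a+n-1)` in `ℝ`. -/
noncomputable def poch (a : ℝ) (n : ℕ) : ℝ := ∏ j ∈ Finset.range n, (a + j)

/-- The `m`-th Legendre polynomial `P_m` (Gegenbauer with parameter 1/2, `P_m(1) = 1`),
via the Rodrigues formula `P_m(x) = (1/(2^m m!)) dᵐ/dxᵐ (x² - 1)^m`. -/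
noncomputable def legendreP (m : ℕ) (x : ℝ) : ℝ :=
  (1 / (2 ^ m * (m.factorial : ℝ))) * iteratedDeriv m (fun t : ℝ => (t ^ 2 - 1) ^ m) x

open Polynomial MeasureTheory intervalIntegral Finset

namespace LegendreMomentAux

lemma poch_zero (a : ℝ) : poch a 0 = 1 := by simp [poch]

lemma poch_succ (a : ℝ) (n : ℕ) : poch a (n + 1) = poch a n * (a + n) := by
  simp [poch, Finset.prod_range_succ]

lemma poch_succ' (a : ℝ) (n : ℕ) : poch a (n + 1) = a * poch (a + 1) n := by
  unfold poch
  rw [Finset.prod_range_succ']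
  simp only [Nat.cast_zero, add_zero]
  rw [mul_comm]
  congr 1
  apply Finset.prod_congr rfl
  intro j _
  push_cast
  ring

lemma poch_add (a : ℝ) (p q : ℕ) : poch a (p + q) = poch a p * poch (a + p) q := by
  unfold poch
  rw [Finset.prod_range_add]
  congr 1
  apply Finset.prod_congr rfl
  intro j _
  push_cast
  ring

lemma poch_pos {a : ℝ} (ha : 0 < a) (n : ℕ) : 0 < poch a n := by
  apply Finset.prod_pos
  intro j _
  positivity

lemma poch_factorial (n : ℕ) : ∀ j : ℕ, ((n.factorial : ℝ)) * poch ((n : ℝ) + 1) j = ((n + j).factorial : ℝ)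
  | 0 => by simp [poch_zero]
  | (j + 1) => by
    rw [poch_succ, ← mul_assoc, poch_factorial n j, ← add_assoc, Nat.factorial_succ]
    push_cast
    ring

lemma factorial_two_mul : ∀ k : ℕ, (((2 * k).factorial : ℝ)) = 4 ^ k * (k.factorial : ℝ) * poch (1 / 2) k
  | 0 => by simp [poch_zero]
  | (k + 1) => by
    have h : 2 * (k + 1) = 2 * k + 1 + 1 := by ring
    rw [h, Nat.factorial_succ, Nat.factorial_succ, poch_succ, Nat.factorial_succ]
    push_cast
    rw [factorial_two_mul k]
    ring

/-- iterated derivative of a polynomial function. -/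
lemma iteratedDeriv_eval (P : ℝ[X]) : ∀ n : ℕ,
    iteratedDeriv n (fun x : ℝ => P.eval x) = fun x => (derivative^[n] P).eval x
  | 0 => by simp
  | (n + 1) => by
    rw [iteratedDeriv_succ, iteratedDeriv_eval P n, Function.iterate_succ_apply']
    funext x
    exact Polynomial.deriv _

lemma iter_deriv_dvd (r : ℝ) : ∀ (i m : ℕ), i ≤ m → ∀ Q : ℝ[X],
    ∃ R : ℝ[X], derivative^[i] ((X - C r) ^ m * Q) = (X - C r) ^ (m - i) * R
  | 0, m, _, Q => ⟨Q, by simp⟩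
  | (i + 1), m, h, Q => by
    obtain ⟨m', rfl⟩ : ∃ m', m = m' + 1 := ⟨m - 1, by omega⟩
    have key : derivative ((X - C r) ^ (m' + 1) * Q)
        = (X - C r) ^ m' * ((C ((m' : ℝ) + 1)) * Q + (X - C r) * derivative Q) := by
      rw [derivative_mul, derivative_pow]
      simp only [derivative_sub, derivative_X, derivative_C, sub_zero, mul_one,
        Nat.add_sub_cancel, Nat.cast_add, Nat.cast_one, map_add, map_one]
      ring
    rw [Function.iterate_succ_apply, key]
    obtain ⟨R, hR⟩ := iter_deriv_dvd r i m' (by omega) _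
    refine ⟨R, ?_⟩
    rw [hR]
    congr 2
    omega

lemma eval_iter_deriv_zero (m i : ℕ) (hi : i < m) :
    (derivative^[i] (((X : ℝ[X]) ^ 2 - 1) ^ m)).eval 1 = 0 ∧
    (derivative^[i] (((X : ℝ[X]) ^ 2 - 1) ^ m)).eval (-1) = 0 := by
  constructor
  · have h1 : ((X : ℝ[X]) ^ 2 - 1) ^ m = (X - C 1) ^ m * ((X + 1) ^ m) := by
      rw [← mul_pow]
      congr 1
      simp only [map_one]
      ring
    obtain ⟨R, hR⟩ := iter_deriv_dvd 1 i m (le_of_lt hi) ((X + 1) ^ m)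
    rw [h1, hR]
    simp only [eval_mul, eval_pow, eval_sub, eval_X, eval_C, sub_self]
    rw [zero_pow (by omega)]
    ring
  · have h1 : ((X : ℝ[X]) ^ 2 - 1) ^ m = (X - C (-1)) ^ m * ((X - 1) ^ m) := by
      rw [← mul_pow]
      congr 1
      simp only [map_neg, map_one, sub_neg_eq_add]
      ring
    obtain ⟨R, hR⟩ := iter_deriv_dvd (-1) i m (le_of_lt hi) ((X - 1) ^ m)
    rw [h1, hR]
    simp only [eval_mul, eval_pow, eval_sub, eval_X, eval_C, neg_sub_neg, sub_self,
      sub_neg_eq_add, neg_add_cancel]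
    rw [zero_pow (by omega)]
    ring

lemma parts (P Q : ℝ[X]) (m : ℕ)
    (hQ : ∀ i < m, (derivative^[i] Q).eval 1 = 0 ∧ (derivative^[i] Q).eval (-1) = 0) :
    ∀ n, n ≤ m → (∫ x in (-1:ℝ)..1, P.eval x * (derivative^[m] Q).eval x)
      = (-1) ^ n * ∫ x in (-1:ℝ)..1, (derivative^[n] P).eval x * (derivative^[m - n] Q).eval x
  | 0, _ => by simp
  | (n + 1), h => by
    rw [parts P Q m hQ n (by omega)]
    have hmn : m - n = (m - (n + 1)) + 1 := by omega
    have hu : ∀ x ∈ Set.uIcc (-1:ℝ) 1, HasDerivAt (fun y => (derivative^[n] P).eval y)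
        ((derivative^[n + 1] P).eval x) x := by
      intro x _
      rw [Function.iterate_succ_apply']
      exact Polynomial.hasDerivAt (derivative^[n] P) x
    have hv : ∀ x ∈ Set.uIcc (-1:ℝ) 1, HasDerivAt (fun y => (derivative^[m - (n + 1)] Q).eval y)
        ((derivative^[m - n] Q).eval x) x := by
      intro x _
      rw [hmn, Function.iterate_succ_apply']
      exact Polynomial.hasDerivAt (derivative^[m - (n + 1)] Q) x
    have hu' : IntervalIntegrable (fun x => (derivative^[n + 1] P).eval x) volume (-1:ℝ) 1 :=
      ((derivative^[n + 1] P).continuous).intervalIntegrable _ _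
    have hv' : IntervalIntegrable (fun x => (derivative^[m - n] Q).eval x) volume (-1:ℝ) 1 :=
      ((derivative^[m - n] Q).continuous).intervalIntegrable _ _
    have key := intervalIntegral.integral_mul_deriv_eq_deriv_mul hu hv hu' hv'
    rw [(hQ (m - (n + 1)) (by omega)).1, (hQ (m - (n + 1)) (by omega)).2] at key
    rw [key]
    ring

lemma J_val : ∀ (m k : ℕ), (∫ x in (-1:ℝ)..1, x ^ (2 * k) * (1 - x ^ 2) ^ m)
    = (m.factorial : ℝ) / poch ((k : ℝ) + 1 / 2) (m + 1)
  | 0, k => by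
    have hk : ((2 * k : ℕ) : ℝ) + 1 ≠ 0 := by positivity
    simp only [pow_zero, mul_one, integral_pow]
    have hodd : Odd (2 * k + 1) := ⟨k, by ring⟩
    rw [hodd.neg_one_pow, one_pow]
    rw [poch_succ, poch_zero, Nat.factorial_zero]
    push_cast
    have h2 : (k : ℝ) + 1 / 2 ≠ 0 := by positivity
    field_simp
    ring
  | (m + 1), k => by
    have h2k : (2 * (k : ℝ) + 1) ≠ 0 := by positivity
    have hu : ∀ x ∈ Set.uIcc (-1:ℝ) 1, HasDerivAt (fun y : ℝ => (1 - y ^ 2) ^ (m + 1))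
        (((m : ℝ) + 1) * (1 - x ^ 2) ^ m * (-(2 * x))) x := by
      intro x _
      have h1 : HasDerivAt (fun y : ℝ => 1 - y ^ 2) (-(2 * x)) x := by
        have := (hasDerivAt_pow 2 x).const_sub 1
        simpa using this
      have := h1.fun_pow (m + 1)
      simpa using this
    have hv : ∀ x ∈ Set.uIcc (-1:ℝ) 1, HasDerivAt (fun y : ℝ => y ^ (2 * k + 1) / (2 * (k : ℝ) + 1))
        (x ^ (2 * k)) x := by
      intro x _
      have := (hasDerivAt_pow (2 * k + 1) x).div_const (2 * (k : ℝ) + 1)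
      convert this using 1
      · rfl
      · rfl
      push_cast
      field_simp
    have hu' : IntervalIntegrable (fun x : ℝ => ((m : ℝ) + 1) * (1 - x ^ 2) ^ m * (-(2 * x)))
        volume (-1:ℝ) 1 := (Continuous.intervalIntegrable (by continuity) _ _)
    have hv' : IntervalIntegrable (fun x : ℝ => x ^ (2 * k)) volume (-1:ℝ) 1 :=
      (Continuous.intervalIntegrable (by continuity) _ _)
    have key := intervalIntegral.integral_mul_deriv_eq_deriv_mul hu hv hu' hv'
    simp only [one_pow, neg_one_sq, sub_self] at key
    rw [zero_pow (Nat.succ_ne_zero m), zero_mul, zero_mul, sub_zero, zero_sub] at key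
    have heq : (∫ x in (-1:ℝ)..1, x ^ (2 * k) * (1 - x ^ 2) ^ (m + 1))
        = ∫ x in (-1:ℝ)..1, (1 - x ^ 2) ^ (m + 1) * x ^ (2 * k) := by
      congr 1; funext x; ring
    have heq2 : (∫ x in (-1:ℝ)..1, ((m : ℝ) + 1) * (1 - x ^ 2) ^ m * (-(2 * x))
          * (x ^ (2 * k + 1) / (2 * (k : ℝ) + 1)))
        = (-(2 * ((m : ℝ) + 1)) / (2 * (k : ℝ) + 1)) *
            ∫ x in (-1:ℝ)..1, x ^ (2 * (k + 1)) * (1 - x ^ 2) ^ m := by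
      rw [← intervalIntegral.integral_const_mul]
      congr 1; funext x
      have : 2 * (k + 1) = 2 * k + 1 + 1 := by ring
      rw [this]
      simp only [div_eq_mul_inv]
      ring
    rw [heq, key, heq2, J_val m (k + 1)]
    have h1 : poch ((k : ℝ) + 1 / 2) (m + 1 + 1) = ((k : ℝ) + 1 / 2) * poch ((k : ℝ) + 1 + 1 / 2) (m + 1) := by
      rw [poch_succ']
      congr 1
      ring
    rw [h1]
    have hpos : 0 < poch ((k : ℝ) + 1 + 1 / 2) (m + 1) := poch_pos (by positivity) _
    have hk2 : ((k : ℝ) + 1 / 2) ≠ 0 := by positivity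
    rw [Nat.factorial_succ]
    push_cast
    field_simp

end LegendreMomentAux

open LegendreMomentAux

/-- The moment `c_k^m = ∫_{-1}^1 x^{m+2k} P_m(x) dx` of the Legendre polynomial equals
`m! (m+1)_{2k} / (2^{m-1} (3/2)_m 4^k k! (m+3/2)_k)`. -/
theorem legendre_moment (m k : ℕ) :
    (∫ x in (-1 : ℝ)..1, x ^ (m + 2 * k) * legendreP m x) =
      (m.factorial : ℝ) * poch ((m : ℝ) + 1) (2 * k) /
        ((2 : ℝ) ^ ((m : ℤ) - 1) * poch (3 / 2) m * 4 ^ k * (k.factorial : ℝ) *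
          poch ((m : ℝ) + 3 / 2) k) := by
  classical
  set Q : ℝ[X] := ((X : ℝ[X]) ^ 2 - 1) ^ m with hQdef
  set P : ℝ[X] := (X : ℝ[X]) ^ (m + 2 * k) with hPdef
  have hfun : (fun t : ℝ => (t ^ 2 - 1) ^ m) = fun t : ℝ => Q.eval t := by
    funext t; simp [hQdef]
  have hleg : ∀ x : ℝ, legendreP m x
      = (1 / (2 ^ m * (m.factorial : ℝ))) * (derivative^[m] Q).eval x := by
    intro x
    rw [legendreP, hfun, iteratedDeriv_eval]
  have step1 : (∫ x in (-1 : ℝ)..1, x ^ (m + 2 * k) * legendreP m x)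
      = (1 / (2 ^ m * (m.factorial : ℝ))) *
          ∫ x in (-1 : ℝ)..1, P.eval x * (derivative^[m] Q).eval x := by
    rw [← intervalIntegral.integral_const_mul]
    congr 1; funext x
    rw [hleg x]
    simp [hPdef]
    ring
  have hQvan : ∀ i < m, (derivative^[i] Q).eval 1 = 0 ∧ (derivative^[i] Q).eval (-1) = 0 :=
    fun i hi => eval_iter_deriv_zero m i hi
  have step2 := parts P Q m hQvan m le_rfl
  rw [Nat.sub_self] at step2
  have hDP : derivative^[m] P = (((m + 2 * k).descFactorial m : ℝ)) • (X : ℝ[X]) ^ (2 * k) := by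
    rw [hPdef, Polynomial.iterate_derivative_X_pow_eq_smul]
    congr 2
    omega
  have step3 : (∫ x in (-1 : ℝ)..1, (derivative^[m] P).eval x * (derivative^[0] Q).eval x)
      = (((m + 2 * k).descFactorial m : ℝ)) * ((-1 : ℝ) ^ m *
          ∫ x in (-1 : ℝ)..1, x ^ (2 * k) * (1 - x ^ 2) ^ m) := by
    rw [← intervalIntegral.integral_const_mul, ← intervalIntegral.integral_const_mul]
    congr 1; funext x
    rw [hDP]
    simp only [Function.iterate_zero_apply, hQdef, eval_smul, eval_pow, eval_sub, eval_X,
      eval_one, smul_eq_mul, eval_mul]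
    have : (x ^ 2 - 1) ^ m = (-1 : ℝ) ^ m * (1 - x ^ 2) ^ m := by
      rw [← mul_pow]
      congr 1; ring
    rw [this]
    ring
  rw [step1, step2, step3, J_val m k]
  -- Now pure algebra.
  set d : ℝ := ((m + 2 * k).descFactorial m : ℝ) with hd
  have hsq : (-1 : ℝ) ^ m * ((-1 : ℝ) ^ m) = 1 := by
    rw [← mul_pow]; norm_num
  have hdfac : ((2 * k).factorial : ℝ) * d = ((m + 2 * k).factorial : ℝ) := by
    have h := Nat.factorial_mul_descFactorial (show m ≤ m + 2 * k by omega)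
    rw [show m + 2 * k - m = 2 * k by omega] at h
    rw [hd, ← Nat.cast_mul, h]
  have h2k := factorial_two_mul k
  have hmk : ((m.factorial : ℝ)) * poch ((m : ℝ) + 1) (2 * k) = (((m + 2 * k).factorial : ℝ)) :=
    poch_factorial m (2 * k)
  have hpochsplit : poch (1 / 2) k * poch ((k : ℝ) + 1 / 2) (m + 1)
      = (1 / 2) * (poch (3 / 2) m * poch ((m : ℝ) + 3 / 2) k) := by
    have e1 : poch (1 / 2) (k + (m + 1)) = poch (1 / 2) k * poch ((k : ℝ) + 1 / 2) (m + 1) := by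
      rw [poch_add]
      congr 2
      ring
    have e2 : poch (1 / 2) (k + (m + 1)) = (1 / 2) * (poch (3 / 2) m * poch ((m : ℝ) + 3 / 2) k) := by
      have : k + (m + 1) = (m + k) + 1 := by omega
      rw [this, poch_succ']
      have : (m + k : ℕ) = m + k := rfl
      rw [show (1 / 2 : ℝ) + 1 = 3 / 2 by norm_num]
      rw [poch_add (3 / 2) m k]
      congr 2
      ring
    rw [← e1, e2]
  have hzpow : (2 : ℝ) ^ ((m : ℤ) - 1) = 2 ^ m / 2 := by
    rw [zpow_sub₀ (two_ne_zero), zpow_one, zpow_natCast]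
  -- nonzeroness
  have hPk : 0 < poch (1 / 2) k := poch_pos (by norm_num) _
  have hPkm : 0 < poch ((k : ℝ) + 1 / 2) (m + 1) := poch_pos (by positivity) _
  have hA : 0 < poch (3 / 2) m := poch_pos (by norm_num) _
  have hB : 0 < poch ((m : ℝ) + 3 / 2) k := poch_pos (by positivity) _
  have hmf : (0 : ℝ) < (m.factorial : ℝ) := by positivity
  have hkf : (0 : ℝ) < (k.factorial : ℝ) := by positivity
  have h2kf : (0 : ℝ) < ((2 * k).factorial : ℝ) := by positivity
  have stepA : (1 / (2 ^ m * (m.factorial : ℝ))) *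
      ((-1 : ℝ) ^ m * (d * ((-1 : ℝ) ^ m * ((m.factorial : ℝ) / poch ((k : ℝ) + 1 / 2) (m + 1)))))
      = d * ((m.factorial : ℝ) / poch ((k : ℝ) + 1 / 2) (m + 1)) / (2 ^ m * (m.factorial : ℝ)) := by
    calc (1 / (2 ^ m * (m.factorial : ℝ))) *
        ((-1 : ℝ) ^ m * (d * ((-1 : ℝ) ^ m * ((m.factorial : ℝ) / poch ((k : ℝ) + 1 / 2) (m + 1)))))
        = ((-1 : ℝ) ^ m * (-1 : ℝ) ^ m) *
            (d * ((m.factorial : ℝ) / poch ((k : ℝ) + 1 / 2) (m + 1)) / (2 ^ m * (m.factorial : ℝ))) := by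
          ring
      _ = _ := by rw [hsq, one_mul]
  rw [stepA, hzpow]
  rw [show d * ((m.factorial : ℝ) / poch ((k : ℝ) + 1 / 2) (m + 1)) / (2 ^ m * (m.factorial : ℝ))
      = d * (m.factorial : ℝ) / (poch ((k : ℝ) + 1 / 2) (m + 1) * (2 ^ m * (m.factorial : ℝ))) by
    ring]
  rw [div_eq_div_iff (by positivity) (by positivity)]
  refine mul_left_cancel₀ hPk.ne' ?_
  linear_combination
    (-(2 : ℝ) ^ m / 2 * poch (3 / 2) m * poch ((m : ℝ) + 3 / 2) k * (m.factorial : ℝ) * d) * h2k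
    + ((2 : ℝ) ^ m / 2 * poch (3 / 2) m * poch ((m : ℝ) + 3 / 2) k * (m.factorial : ℝ)) * hdfac
    + (-(2 : ℝ) ^ m / 2 * poch (3 / 2) m * poch ((m : ℝ) + 3 / 2) k * (m.factorial : ℝ)) * hmk
    + (-(2 : ℝ) ^ m * (m.factorial : ℝ) ^ 2 * poch ((m : ℝ) + 1) (2 * k)) * hpochsplit
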